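/- Let Γ be a compact profinite group and ρ_i : Γ → G_i (i ∈ I) continuous homomorphisms into Hausdorff topological groups. If the image ρ(Γ) of ρ = (ρ_i) is an open (equivalently finite-index) subgroup of ∏_i ρ_i(Γ), then there exists an open subgroup Γ' ≤ Γ such that the restrictions of the ρ_i to Γ' are independent, i.e. the image of Γ' under ρ equals ∏_i ρ_i(Γ'). -/

import Mathlib

/-- (RO) ⟹ (PR): if the image of a profinite group `Γ` under `ρ = (ρ_i)` has finite
index in `∏ ρ_i(Γ)`, then the `ρ_i` are independent on some open subgroup of `Γ`. -/
theorem stmt_2 {Γ : Type*} [Group Γ] [TopologicalSpace Γ] [IsTopologicalGroup Γ]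
    [CompactSpace Γ] [T2Space Γ] [TotallyDisconnectedSpace Γ]
    {I : Type*} {G : I → Type*} [∀ i, Group (G i)] [∀ i, TopologicalSpace (G i)]
    [∀ i, IsTopologicalGroup (G i)] [∀ i, T2Space (G i)]
    (ρ : ∀ i, Γ →* G i) (hcont : ∀ i, Continuous (ρ i))
    (hfin : ((MonoidHom.pi ρ).range.relIndex
      (Subgroup.pi Set.univ fun i => (ρ i).range)) ≠ 0) :
    ∃ Γ' : Subgroup Γ, IsOpen (Γ' : Set Γ) ∧
      ∀ x : ∀ i, G i, (∀ i, ∃ g ∈ Γ', ρ i g = x i) →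
        ∃ g ∈ Γ', ∀ i, ρ i g = x i := by
  classical
  set ρ' : Γ →* ∀ i, G i := MonoidHom.pi ρ with hρ'
  have contρ' : Continuous ρ' := continuous_pi hcont
  set K : Set (∀ i, G i) := Set.range ρ' with hKdef
  have Kclosed : IsClosed K := (isCompact_range contρ').isClosed
  set P : Subgroup (∀ i, G i) := Subgroup.pi Set.univ fun i => (ρ i).range with hPdef
  have hPset : (P : Set (∀ i, G i)) = Set.pi Set.univ fun i => Set.range (ρ i) := by
    ext x
    simp [hPdef, Subgroup.mem_pi, Set.mem_pi]
  have Pcompact : IsCompact (P : Set (∀ i, G i)) := by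
    rw [hPset]
    exact isCompact_univ_pi fun i => isCompact_range (hcont i)
  haveI : CompactSpace P := isCompact_iff_compactSpace.mp Pcompact
  set H' : Subgroup P := ρ'.range.subgroupOf P with hH'def
  haveI : H'.FiniteIndex := ⟨hfin⟩
  have hH'coe : (H' : Set P) = Subtype.val ⁻¹' K := by
    ext x
    simp [hH'def, Subgroup.mem_subgroupOf, hKdef, MonoidHom.mem_range, Set.mem_range, eq_comm]
  have H'closed : IsClosed (H' : Set P) := by
    rw [hH'coe]
    exact Kclosed.preimage continuous_subtype_val
  have H'open : IsOpen (H' : Set P) :=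
    Subgroup.isOpen_of_isClosed_of_finiteIndex H' H'closed
  obtain ⟨U, Uopen, hU⟩ : ∃ U : Set (∀ i, G i), IsOpen U ∧ Subtype.val ⁻¹' U = (H' : Set P) :=
    isOpen_induced_iff.mp H'open
  have h1U : (1 : ∀ i, G i) ∈ U := by
    have : ((1 : P) : ∀ i, G i) ∈ U := by
      have : (1 : P) ∈ (H' : Set P) := one_mem H'
      rw [← hU] at this
      exact this
    simpa using this
  obtain ⟨F, u, hFu, hFsub⟩ := (isOpen_pi_iff.mp Uopen) 1 h1U
  -- the key inclusion
  have key : ∀ x : ∀ i, G i, (∀ i ∈ F, x i ∈ u i) → (∀ i, x i ∈ Set.range (ρ i)) →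
      ∃ g : Γ, ρ' g = x := by
    intro x hxu hxr
    have hxP : x ∈ P := by
      rw [← SetLike.mem_coe, hPset]
      intro i _
      exact hxr i
    have hxU : (⟨x, hxP⟩ : P) ∈ Subtype.val ⁻¹' U := by
      apply hFsub
      intro i hi
      exact hxu i hi
    rw [hU] at hxU
    have : x ∈ ρ'.range := hxU
    exact this
  -- choose open subgroups of Γ mapping into the u i
  have hex : ∀ i : F, ∃ Δ : Subgroup Γ, IsOpen (Δ : Set Γ) ∧ (Δ : Set Γ) ⊆ ρ i ⁻¹' u i := by
    rintro ⟨i, hi⟩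
    obtain ⟨hopen, h1⟩ := hFu i hi
    have hpre : IsOpen (ρ i ⁻¹' u i) := hopen.preimage (hcont i)
    have h1' : (1 : Γ) ∈ ρ i ⁻¹' u i := by
      simp only [Set.mem_preimage, map_one]
      exact h1
    obtain ⟨V, Vclopen, h1V, hVsub⟩ := compact_exists_isClopen_in_isOpen hpre h1'
    obtain ⟨Hs, hHs⟩ := IsTopologicalGroup.exist_openSubgroup_sub_clopen_nhds_of_one Vclopen h1V
    exact ⟨Hs, Hs.isOpen, hHs.trans hVsub⟩
  choose Δ Δopen Δsub using hex
  refine ⟨⨅ i : F, Subgroup.comap (ρ i) (Subgroup.map (ρ i) (Δ i)), ?_, ?_⟩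
  · apply Subgroup.isOpen_mono (H₁ := ⨅ i : F, Δ i)
    · exact iInf_mono fun i => Subgroup.le_comap_map _ _
    · rw [Subgroup.coe_iInf]
      exact isOpen_iInter_of_finite fun i => Δopen i
  · intro x hx
    have hxmap : ∀ i : F, x i ∈ Subgroup.map (ρ (i : I)) (Δ i) := by
      rintro ⟨i, hi⟩
      obtain ⟨g, hg, hgx⟩ := hx i
      have := (iInf_le (fun j : F => Subgroup.comap (ρ j) (Subgroup.map (ρ j) (Δ j)))
        ⟨i, hi⟩) hg
      rw [Subgroup.mem_comap] at this
      rwa [hgx] at this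
    have hxu : ∀ i ∈ F, x i ∈ u i := by
      intro i hi
      obtain ⟨d, hd, hdx⟩ := hxmap ⟨i, hi⟩
      have := Δsub ⟨i, hi⟩ hd
      rw [Set.mem_preimage] at this
      rwa [hdx] at this
    have hxr : ∀ i, x i ∈ Set.range (ρ i) := by
      intro i
      obtain ⟨g, _, hgx⟩ := hx i
      exact ⟨g, hgx⟩
    obtain ⟨g, hg⟩ := key x hxu hxr
    have hgi : ∀ i, ρ i g = x i := fun i => congrFun hg i
    refine ⟨g, ?_, hgi⟩
    rw [Subgroup.mem_iInf]
    rintro ⟨i, hi⟩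
    rw [Subgroup.mem_comap, hgi i]
    exact hxmap ⟨i, hi⟩
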